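/- Let χ ∈ ℝ with a ≤ χ − 1 and χ ≤ b. Then f′_{(χ,0)}(w) ≠ 0 for every w ∈ ℂ ∖ ℝ; in particular, the liquid region 𝓛 contains no point (χ, η) with η = 0. -/

import Mathlib

open MeasureTheory Complex Filter Set

noncomputable section

/-- The support of a measure on `ℝ`. -/
def msupport (μ : Measure ℝ) : Set ℝ := {x | ∀ U ∈ nhds x, μ U ≠ 0}

/-- The Cauchy transform `C(w) = ∫ (w - x)⁻¹ dμ(x)`. -/
def cauchy (μ : Measure ℝ) (w : ℂ) : ℂ := ∫ x, (w - (x : ℂ))⁻¹ ∂μ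

/-- `f′_{(χ,η)}(w) = C(w) + Log (w - χ) - Log (w - χ - η + 1)`. -/
def fprime (μ : Measure ℝ) (χ η : ℝ) (w : ℂ) : ℂ :=
  cauchy μ w + Complex.log (w - (χ : ℂ)) - Complex.log (w - (χ : ℂ) - (η : ℂ) + 1)

/-- `χ_L(w) = w + (w - w̄)(e^{C(w̄)} - 1)/(e^{C(w)} - e^{C(w̄)})`. -/
def chiL (μ : Measure ℝ) (w : ℂ) : ℂ :=
  w + (w - (starRingEnd ℂ) w) * (Complex.exp (cauchy μ ((starRingEnd ℂ) w)) - 1) /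
    (Complex.exp (cauchy μ w) - Complex.exp (cauchy μ ((starRingEnd ℂ) w)))

/-- `η_L(w) = 1 + (w - w̄)(e^{C(w)} - 1)(e^{C(w̄)} - 1)/(e^{C(w)} - e^{C(w̄)})`. -/
def etaL (μ : Measure ℝ) (w : ℂ) : ℂ :=
  1 + (w - (starRingEnd ℂ) w) * (Complex.exp (cauchy μ w) - 1) *
      (Complex.exp (cauchy μ ((starRingEnd ℂ) w)) - 1) /
    (Complex.exp (cauchy μ w) - Complex.exp (cauchy μ ((starRingEnd ℂ) w)))

/-- The liquid region. -/
def liquid (μ : Measure ℝ) (a b : ℝ) : Set (ℝ × ℝ) :=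
  {p | a ≤ p.1 + p.2 - 1 ∧ p.1 + p.2 - 1 ≤ p.1 ∧ p.1 ≤ b ∧ 0 ≤ p.2 ∧ p.2 ≤ 1 ∧
    ∃ w : ℂ, w.im ≠ 0 ∧ fprime μ p.1 p.2 w = 0}

set_option maxHeartbeats 1000000 in
lemma key_no_root (μ : Measure ℝ) (a b : ℝ) [IsProbabilityMeasure μ]
    (hle : μ ≤ volume) (ha : a ∈ msupport μ) (hb : b ∈ msupport μ) (hab : 1 < b - a)
    (χ : ℝ) (h1 : a ≤ χ - 1) (w : ℂ) (hw : w.im ≠ 0) :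
    fprime μ χ 0 w ≠ 0 := by
  intro hzero
  have hwim : (0:ℝ) < |w.im| := abs_pos.mpr hw
  have hwx : ∀ x : ℝ, w - (x:ℂ) ≠ 0 := by
    intro x h
    apply hw
    have := congrArg Complex.im h
    simpa using this
  set f : ℝ → ℂ := fun x => (w - (x:ℂ))⁻¹ with hf
  have hfc : Continuous f := (continuous_const.sub Complex.continuous_ofReal).inv₀ hwx
  have hbound : ∀ x : ℝ, ‖f x‖ ≤ |w.im|⁻¹ := by
    intro x
    rw [hf]
    simp only [norm_inv]
    apply inv_anti₀ hwim
    calc |w.im| = |(w - (x:ℂ)).im| := by simp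
    _ ≤ ‖w - (x:ℂ)‖ := by exact Complex.abs_im_le_norm _
  have hintμ : Integrable f μ :=
    (integrable_const (|w.im|⁻¹)).mono' hfc.aestronglyMeasurable (Filter.Eventually.of_forall hbound)
  -- FTC
  have hderiv : ∀ x : ℝ, HasDerivAt (fun y : ℝ => -Complex.log (w - (y:ℂ))) (f x) x := by
    intro x
    have hz : w - (x:ℂ) ∈ Complex.slitPlane := Or.inr (by simpa using hw)
    have hinner : HasDerivAt (fun z : ℂ => w - z) (-1) (x:ℂ) := (hasDerivAt_id _).const_sub w
    have houter := (Complex.hasDerivAt_log hz).comp (x:ℂ) hinner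
    have hneg := houter.neg
    have := hneg.comp_ofReal
    simpa [hf] using this
  have hle' : χ - 1 ≤ χ := by linarith
  have hFTC : ∫ x in (χ-1)..χ, f x =
      Complex.log (w - ((χ-1:ℝ):ℂ)) - Complex.log (w - (χ:ℂ)) := by
    rw [intervalIntegral.integral_eq_sub_of_hasDerivAt (fun x _ => hderiv x)
      (hfc.intervalIntegrable _ _)]
    ring
  have hEqC : ∫ x, f x ∂μ = ∫ x in Set.Ioc (χ-1) χ, f x := by
    have h0 : cauchy μ w = ∫ x in (χ-1)..χ, f x := by
      have hz := hzero
      unfold fprime at hz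
      rw [hFTC, show w - ((χ-1:ℝ):ℂ) = w - (χ:ℂ) - ((0:ℝ):ℂ) + 1 by push_cast; ring]
      linear_combination hz
    have : cauchy μ w = ∫ x, f x ∂μ := rfl
    rw [← this, h0, intervalIntegral.integral_of_le hle']
  set s : Set ℝ := Set.Ioc (χ-1) χ with hs
  have hsm : MeasurableSet s := measurableSet_Ioc
  have hvol : volume s = 1 := by rw [hs, Real.volume_Ioc]; norm_num
  have hintν : IntegrableOn f s volume := (hfc.intervalIntegrable (χ-1) χ).1
  -- the weight k
  set k : ℝ → ℝ := fun x => ((w.re - x)^2 + w.im^2)⁻¹ with hk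
  have hkpos : ∀ x : ℝ, 0 < (w.re - x)^2 + w.im^2 := by
    intro x
    have : 0 < w.im^2 := by positivity
    nlinarith [sq_nonneg (w.re - x)]
  have hk0 : ∀ x : ℝ, 0 ≤ k x := fun x => inv_nonneg.mpr (hkpos x).le
  have hkpos' : ∀ x : ℝ, 0 < k x := fun x => inv_pos.mpr (hkpos x)
  have hns : ∀ x : ℝ, Complex.normSq (w - (x:ℂ)) = (w.re - x)^2 + w.im^2 := by
    intro x
    simp [Complex.normSq_apply]
    ring
  have hre : ∀ x : ℝ, (f x).re = (w.re - x) * k x := by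
    intro x
    rw [hf]
    rw [Complex.inv_re, hns, hk, div_eq_mul_inv]
    norm_num [Complex.sub_re]
  have him : ∀ x : ℝ, (f x).im = -w.im * k x := by
    intro x
    rw [hf]
    rw [Complex.inv_im, hns, hk, div_eq_mul_inv]
    norm_num [Complex.sub_im]
  -- integrabilities
  have hkfun : k = fun x => (-(w.im)⁻¹) * (f x).im := by
    funext x
    rw [him x]
    field_simp
  have hkμ : Integrable k μ := by rw [hkfun]; exact hintμ.im.const_mul _
  have hkν : IntegrableOn k s volume := by rw [hkfun]; exact hintν.im.const_mul _
  have hReμ : Integrable (fun x => (w.re - x) * k x) μ := by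
    have h : Integrable (fun x => (f x).re) μ := hintμ.re
    rwa [funext hre] at h
  have hReν : IntegrableOn (fun x => (w.re - x) * k x) s volume := by
    have h : Integrable (fun x => (f x).re) (volume.restrict s) := hintν.re
    rwa [funext hre] at h
  have hxkfun : (fun x : ℝ => x * k x) = fun x => w.re * k x - (w.re - x) * k x := by
    funext x; ring
  have hxkμ : Integrable (fun x : ℝ => x * k x) μ := by
    rw [hxkfun]; exact (hkμ.const_mul _).sub hReμ
  have hxkν : IntegrableOn (fun x : ℝ => x * k x) s volume := by
    rw [hxkfun]; exact (hkν.const_mul _).sub hReν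
  have h1ν : IntegrableOn (fun _ : ℝ => (1:ℝ)) s volume := by
    refine (integrableOn_const_iff (C := (1:ℝ))).mpr (Or.inr ?_)
    rw [hvol]; exact ENNReal.one_lt_top
  -- moment identities
  have E1 : ∫ x, k x ∂μ = ∫ x in s, k x := by
    have h1 := integral_im (𝕜 := ℂ) hintμ
    have h2 := integral_im (𝕜 := ℂ) hintν
    rw [hEqC] at h1
    have himEq : ∫ x, (f x).im ∂μ = ∫ x in s, (f x).im := by
      simpa using h1.trans h2.symm
    simp_rw [him] at himEq
    rw [integral_const_mul, integral_const_mul] at himEq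
    exact mul_left_cancel₀ (neg_ne_zero.mpr hw) himEq
  have ERe : ∫ x, (w.re - x) * k x ∂μ = ∫ x in s, (w.re - x) * k x := by
    have h1 := integral_re (𝕜 := ℂ) hintμ
    have h2 := integral_re (𝕜 := ℂ) hintν
    rw [hEqC] at h1
    have hreEq : ∫ x, (f x).re ∂μ = ∫ x in s, (f x).re := by
      simpa using h1.trans h2.symm
    simp_rw [hre] at hreEq
    exact hreEq
  have E2 : ∫ x, x * k x ∂μ = ∫ x in s, x * k x := by
    rw [hxkfun, integral_sub (hkμ.const_mul _) hReμ, integral_sub (hkν.const_mul _) hReν,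
      integral_const_mul, integral_const_mul, E1, ERe]
  have E0 : ∫ x, (1:ℝ) ∂μ = ∫ x in s, (1:ℝ) := by
    rw [integral_const, integral_const]
    simp [Measure.real, hvol]
  -- the quadratic identity
  have hgpt : ∀ x : ℝ, (x - (χ-1)) * ((x - χ) * k x)
      = 1 + (2*w.re - (2*χ - 1)) * (x * k x) + (χ*(χ-1) - w.re^2 - w.im^2) * k x := by
    intro x
    have h0 : ((w.re - x)^2 + w.im^2) * k x = 1 := mul_inv_cancel₀ (hkpos x).ne'
    linear_combination h0
  set G : ℝ → ℝ := fun x => (x - (χ-1)) * ((x - χ) * k x) with hG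
  have hGfun : G = fun x => 1 + (2*w.re - (2*χ - 1)) * (x * k x)
      + (χ*(χ-1) - w.re^2 - w.im^2) * k x := funext hgpt
  have hGμ : Integrable G μ := by
    rw [hGfun]
    exact ((integrable_const 1).add (hxkμ.const_mul _)).add (hkμ.const_mul _)
  have hGν : IntegrableOn G s volume := by
    rw [hGfun]
    exact ((h1ν.add (hxkν.const_mul _)).add (hkν.const_mul _))
  have hlin : ∀ (ν : Measure ℝ), Integrable (fun _ : ℝ => (1:ℝ)) ν →
      Integrable (fun x : ℝ => x * k x) ν → Integrable k ν →
      ∫ x, G x ∂ν = (∫ x, (1:ℝ) ∂ν) + (2*w.re - (2*χ - 1)) * (∫ x, x * k x ∂ν)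
        + (χ*(χ-1) - w.re^2 - w.im^2) * (∫ x, k x ∂ν) := by
    intro ν hone hxk hkk
    have i1 : Integrable (fun x : ℝ => 1 + (2*w.re - (2*χ - 1)) * (x * k x)) ν :=
      hone.add (hxk.const_mul _)
    have i2 : Integrable (fun x : ℝ => (χ*(χ-1) - w.re^2 - w.im^2) * k x) ν :=
      hkk.const_mul _
    have i3 : Integrable (fun x : ℝ => (2*w.re - (2*χ - 1)) * (x * k x)) ν :=
      hxk.const_mul _
    rw [hGfun]
    rw [integral_add i1 i2, integral_add hone i3, integral_const_mul, integral_const_mul]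
  have Eg : ∫ x, G x ∂μ = ∫ x in s, G x := by
    rw [hlin μ (integrable_const 1) hxkμ hkμ, hlin _ h1ν hxkν hkν, E0, E1, E2]
  -- positivity considerations
  have hsplit : ∫ x in s, G x ∂μ + ∫ x in sᶜ, G x ∂μ = ∫ x, G x ∂μ :=
    integral_add_compl hsm hGμ
  have hGnonpos : ∀ x ∈ s, -G x ≥ 0 := by
    intro x hx
    simp only [hG]
    have h1' : 0 ≤ x - (χ-1) := by have := hx.1; dsimp [hs] at *; linarith [hx.1]
    have h2' : x - χ ≤ 0 := by linarith [hx.2]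
    have h := mul_nonneg h1' (mul_nonneg (by linarith : (0:ℝ) ≤ χ - x) (hk0 x))
    nlinarith [h]
  have hmono : ∫ x in s, G x ∂μ ≥ ∫ x in s, G x := by
    have hres : μ.restrict s ≤ volume.restrict s :=
      Measure.restrict_mono (subset_refl s) hle
    have hae : 0 ≤ᵐ[volume.restrict s] fun x => -G x :=
      (ae_restrict_iff' hsm).mpr (Filter.Eventually.of_forall hGnonpos)
    have := integral_mono_measure hres hae hGν.neg
    rw [integral_neg, integral_neg] at this
    linarith
  have hcompl_nonneg : 0 ≤ ∫ x in sᶜ, G x ∂μ := by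
    refine setIntegral_nonneg hsm.compl ?_
    intro x hx
    simp only [hG]
    rcases le_or_gt x (χ-1) with h | h
    · have h2' : x - χ ≤ 0 := by linarith
      have := mul_nonneg (by linarith : (0:ℝ) ≤ (χ-1) - x)
        (mul_nonneg (by linarith : (0:ℝ) ≤ χ - x) (hk0 x))
      nlinarith [this]
    · have h2' : χ < x := by
        by_contra hc
        exact hx ⟨h, not_lt.mp hc⟩
      have := mul_nonneg (by linarith : (0:ℝ) ≤ x - (χ-1))
        (mul_nonneg (by linarith : (0:ℝ) ≤ x - χ) (hk0 x))
      nlinarith [this]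
  have hcz : ∫ x in sᶜ, G x ∂μ = 0 := by
    have : ∫ x in sᶜ, G x ∂μ ≤ 0 := by linarith [Eg, hsplit, hmono]
    linarith
  have haez : G =ᵐ[μ.restrict sᶜ] 0 := by
    refine (integral_eq_zero_iff_of_nonneg_ae ?_ hGμ.restrict).mp hcz
    refine (ae_restrict_iff' hsm.compl).mpr (Filter.Eventually.of_forall ?_)
    intro x hx
    simp only [Pi.zero_apply]
    rcases le_or_gt x (χ-1) with h | h
    · have := mul_nonneg (by linarith : (0:ℝ) ≤ (χ-1) - x)
        (mul_nonneg (by linarith : (0:ℝ) ≤ χ - x) (hk0 x))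
      simp only [hG]; nlinarith [this]
    · have h2' : χ < x := by
        by_contra hc
        exact hx ⟨h, not_lt.mp hc⟩
      have := mul_nonneg (by linarith : (0:ℝ) ≤ x - (χ-1))
        (mul_nonneg (by linarith : (0:ℝ) ≤ x - χ) (hk0 x))
      simp only [hG]; nlinarith [this]
  have hnull : μ.restrict sᶜ {x | G x ≠ 0} = 0 := by
    have := haez
    rw [Filter.EventuallyEq, ae_iff] at this
    simpa using this
  -- μ vanishes outside [χ-1, χ]
  have hIio : μ (Set.Iio (χ-1)) = 0 := by
    have hsub1 : Set.Iio (χ-1) ⊆ {x | G x ≠ 0} := by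
      intro x hx
      have hx' : x < χ - 1 := hx
      have hpos : 0 < G x := by
        simp only [hG]
        have := mul_pos (mul_pos (by linarith : (0:ℝ) < (χ-1) - x)
          (by linarith : (0:ℝ) < χ - x)) (hkpos' x)
        nlinarith [this]
      exact hpos.ne'
    have hsub2 : Set.Iio (χ-1) ⊆ sᶜ := by
      intro x hx
      intro hxs
      have := hxs.1
      simp only [Set.mem_Iio] at hx
      linarith
    have h0 := measure_mono_null hsub1 hnull
    rw [Measure.restrict_apply measurableSet_Iio,
      Set.inter_eq_self_of_subset_left hsub2] at h0
    exact h0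
  have hIoi : μ (Set.Ioi χ) = 0 := by
    have hsub1 : Set.Ioi χ ⊆ {x | G x ≠ 0} := by
      intro x hx
      simp only [Set.mem_Ioi] at hx
      have hpos : 0 < G x := by
        simp only [hG]
        have := mul_pos (mul_pos (by linarith : (0:ℝ) < x - (χ-1))
          (by linarith : (0:ℝ) < x - χ)) (hkpos' x)
        nlinarith [this]
      exact hpos.ne'
    have hsub2 : Set.Ioi χ ⊆ sᶜ := by
      intro x hx hxs
      have := hxs.2
      simp only [Set.mem_Ioi] at hx
      linarith
    have h0 := measure_mono_null hsub1 hnull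
    rw [Measure.restrict_apply measurableSet_Ioi,
      Set.inter_eq_self_of_subset_left hsub2] at h0
    exact h0
  -- contradiction with the support hypotheses
  rcases eq_or_lt_of_le h1 with heq | hlt
  · -- a = χ - 1, so χ < b
    have hbχ : χ < b := by linarith
    exact hb _ (Ioi_mem_nhds hbχ) hIoi
  · exact ha _ (Iio_mem_nhds hlt) hIio

/-- For `χ` with `a ≤ χ - 1` and `χ ≤ b`, the function `f′_{(χ,0)}` has no non-real
zeros; in particular, the liquid region contains no point with `η = 0`. -/
theorem fprime_eta_zero_no_nonreal_root (μ : Measure ℝ) (a b : ℝ) [IsProbabilityMeasure μ]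
    (hle : μ ≤ volume) (hsupp : msupport μ ⊆ Set.Icc a b)
    (ha : a ∈ msupport μ) (hb : b ∈ msupport μ) (hab : 1 < b - a)
    (χ : ℝ) (h1 : a ≤ χ - 1) (h2 : χ ≤ b) :
    (∀ w : ℂ, w.im ≠ 0 → fprime μ χ 0 w ≠ 0) ∧
    ∀ p ∈ liquid μ a b, p.2 ≠ 0 := by
  refine ⟨fun w hw => key_no_root μ a b hle ha hb hab χ h1 w hw, ?_⟩
  rintro ⟨χp, ηp⟩ hp hp2
  obtain ⟨hA, hB, hC, hD, hE, w, hw, hroot⟩ := hp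
  simp only at hp2 hA hroot ⊢
  rw [hp2] at hA hroot
  exact key_no_root μ a b hle ha hb hab χp (by linarith) w hw hroot
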